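/- Let x_1, …, x_m be unit vectors in ℝ^d with |x_i·x_j| ≤ √(2·log(2m²/δ)/d) for all i ≠ j, for some δ ∈ (0,1), let y_i ∈ {−1,+1}, and assume d ≥ 8·m⁴·log(2m²/δ). Let θ = (w_j, b_j)_{j=1}^n be a KKT point of the margin-maximization problem for the fixed-output-weight network. Then b_j ≥ 0 for every j ∈ [n]. -/

import Mathlib

set_option maxHeartbeats 800000


/-- ReLU. -/
noncomputable def relu (z : ℝ) : ℝ := max z 0

/-- Fixed output weights: +1 for the first n/2 neurons, -1 for the rest. -/
def vsign (n : ℕ) (j : Fin n) : ℝ := if (j : ℕ) < n / 2 then 1 else -1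

/-- 2-layer ReLU network on ℝ^d with fixed output weights ±1. -/
noncomputable def netF {d n : ℕ} (w : Fin n → EuclideanSpace ℝ (Fin d)) (b : Fin n → ℝ)
    (x : EuclideanSpace ℝ (Fin d)) : ℝ :=
  ∑ j, vsign n j * relu ((inner ℝ (w j) x : ℝ) + b j)

/-- KKT point (with multipliers `lam`) of the margin-maximization problem for the
fixed-output-weight network. -/
def IsKKTFixWith {d m n : ℕ} (x : Fin m → EuclideanSpace ℝ (Fin d)) (y : Fin m → ℝ)
    (w : Fin n → EuclideanSpace ℝ (Fin d)) (b : Fin n → ℝ) (lam : Fin m → ℝ) : Prop :=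
  (∀ i, 1 ≤ y i * netF w b (x i)) ∧
  (∀ i, 0 ≤ lam i) ∧
  ∃ s : Fin m → Fin n → ℝ,
    (∀ i j, s i j ∈ Set.Icc (0 : ℝ) 1) ∧
    (∀ i j, 0 < (inner ℝ (w j) (x i) : ℝ) + b j → s i j = 1) ∧
    (∀ i j, (inner ℝ (w j) (x i) : ℝ) + b j < 0 → s i j = 0) ∧
    (∀ j, w j = vsign n j • ∑ i, (lam i * y i * s i j) • x i) ∧
    (∀ j, b j = vsign n j * ∑ i, lam i * y i * s i j) ∧
    (∀ i, lam i * (y i * netF w b (x i) - 1) = 0)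

/-- Lemma B.5: all bias terms of a KKT point are nonnegative. -/
theorem stmt14 {d m n : ℕ} (δ : ℝ) (hδ0 : 0 < δ) (hδ1 : δ < 1)
    (hn : Even n)
    (x : Fin m → EuclideanSpace ℝ (Fin d)) (y : Fin m → ℝ)
    (hx : ∀ i, ‖x i‖ = 1)
    (hy : ∀ i, y i = 1 ∨ y i = -1)
    (horth : ∀ i j, i ≠ j →
      |(inner ℝ (x i) (x j) : ℝ)| ≤ Real.sqrt (2 * Real.log (2 * (m : ℝ) ^ 2 / δ) / d))
    (hd : 8 * (m : ℝ) ^ 4 * Real.log (2 * (m : ℝ) ^ 2 / δ) ≤ (d : ℝ))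
    (w : Fin n → EuclideanSpace ℝ (Fin d)) (b : Fin n → ℝ) (lam : Fin m → ℝ)
    (hkkt : IsKKTFixWith x y w b lam) :
    ∀ j, 0 ≤ b j := by
  intro j
  by_contra hbj
  push_neg at hbj
  obtain ⟨hmargin, hlam, s, hs01, hs1, hs0, hw, hb, hcs⟩ := hkkt
  have hvpm : vsign n j = 1 ∨ vsign n j = -1 := by
    unfold vsign; split_ifs <;> simp
  set R := Real.sqrt (2 * Real.log (2 * (m : ℝ) ^ 2 / δ) / d) with hR
  have hR0 : 0 ≤ R := Real.sqrt_nonneg _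
  set c : Fin m → ℝ := fun i => vsign n j * (lam i * y i * s i j) with hc
  set a : Fin m → ℝ := fun i => lam i * s i j with ha
  have ha0 : ∀ i, 0 ≤ a i := fun i => mul_nonneg (hlam i) (hs01 i j).1
  have habs : ∀ i, |c i| = a i := by
    intro i
    have h1 : c i = (vsign n j * y i) * a i := by simp only [hc, ha]; ring
    have h2 : |vsign n j * y i| = 1 := by
      rcases hvpm with h | h <;> rcases hy i with h' | h' <;> simp [h, h']
    rw [h1, abs_mul, h2, one_mul, abs_of_nonneg (ha0 i)]
  have hbsum : b j = ∑ i, c i := by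
    rw [hb j, Finset.mul_sum]
  -- pre-activation formula
  have hp : ∀ k, (inner ℝ (w j) (x k) : ℝ) + b j = ∑ i, c i * ((inner ℝ (x i) (x k) : ℝ) + 1) := by
    intro k
    have hip : (inner ℝ (w j) (x k) : ℝ) = ∑ i, c i * (inner ℝ (x i) (x k) : ℝ) := by
      rw [hw j, real_inner_smul_left, sum_inner, Finset.mul_sum]
      exact Finset.sum_congr rfl fun i _ => by rw [real_inner_smul_left]; ring
    rw [hip, hbsum, ← Finset.sum_add_distrib]
    exact Finset.sum_congr rfl fun i _ => by ring
  -- the set of negative coefficients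
  set B := Finset.univ.filter (fun i => c i < 0) with hB
  have hBne : B.Nonempty := by
    by_contra h
    rw [Finset.not_nonempty_iff_eq_empty, Finset.filter_eq_empty_iff] at h
    have h0 : (0:ℝ) ≤ ∑ i, c i :=
      Finset.sum_nonneg fun i _ => not_lt.1 (h (Finset.mem_univ i))
    rw [← hbsum] at h0; linarith
  obtain ⟨k, hkB, hkmax⟩ := Finset.exists_max_image B a hBne
  have hck : c k < 0 := (Finset.mem_filter.1 hkB).2
  have hak : 0 < a k := by
    rw [← habs k]; exact abs_pos.2 (ne_of_lt hck)
  have hm1 : (1:ℝ) ≤ m := by exact_mod_cast Fin.pos k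
  -- pre-activation at x k is nonnegative
  have hpk : 0 ≤ (inner ℝ (w j) (x k) : ℝ) + b j := by
    by_contra h
    push_neg at h
    have hz : a k = 0 := by simp [ha, hs0 k j h]
    linarith
  -- upper bound on the pre-activation
  set T := ∑ i ∈ Finset.univ.erase k, a i with hT
  have hT0 : 0 ≤ T := Finset.sum_nonneg fun i _ => ha0 i
  have hub : (inner ℝ (w j) (x k) : ℝ) + b j ≤ 2 * c k + ((b j - c k) + T * R) := by
    rw [hp k, ← Finset.add_sum_erase _ _ (Finset.mem_univ k)]
    have hxkk : (inner ℝ (x k) (x k) : ℝ) = 1 := by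
      rw [real_inner_self_eq_norm_sq, hx k]; norm_num
    have hterm : c k * ((inner ℝ (x k) (x k) : ℝ) + 1) = 2 * c k := by rw [hxkk]; ring
    rw [hterm]
    have hrest : ∑ i ∈ Finset.univ.erase k, c i * ((inner ℝ (x i) (x k) : ℝ) + 1)
        ≤ ∑ i ∈ Finset.univ.erase k, (c i + a i * R) := by
      refine Finset.sum_le_sum fun i hi => ?_
      have hik : i ≠ k := Finset.ne_of_mem_erase hi
      have h1 : |(inner ℝ (x i) (x k) : ℝ)| ≤ R := horth i k hik
      have h2 : c i * (inner ℝ (x i) (x k) : ℝ) ≤ a i * R := by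
        calc c i * (inner ℝ (x i) (x k) : ℝ) ≤ |c i * (inner ℝ (x i) (x k) : ℝ)| := le_abs_self _
          _ = a i * |(inner ℝ (x i) (x k) : ℝ)| := by rw [abs_mul, habs]
          _ ≤ a i * R := mul_le_mul_of_nonneg_left h1 (ha0 i)
      have h3 : c i * ((inner ℝ (x i) (x k) : ℝ) + 1)
          = c i * (inner ℝ (x i) (x k) : ℝ) + c i := by ring
      rw [h3]; linarith
    have hsplit : ∑ i ∈ Finset.univ.erase k, (c i + a i * R)
        = (b j - c k) + T * R := by
      rw [Finset.sum_add_distrib, Finset.sum_erase_eq_sub (Finset.mem_univ k), ← hbsum,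
        ← Finset.sum_mul]
    linarith [hrest, hsplit.le, hsplit.ge]
  -- bound T
  have hptwise : ∀ i, a i - c i = if c i < 0 then 2 * a i else 0 := by
    intro i
    by_cases h : c i < 0
    · rw [if_pos h]
      have h1 := habs i
      rw [abs_of_neg h] at h1
      linarith
    · rw [if_neg h]
      have h1 := habs i
      rw [abs_of_nonneg (not_lt.1 h)] at h1
      linarith
  have hsuma : ∑ i, a i = b j + 2 * ∑ i ∈ B, a i := by
    have : ∑ i, a i - ∑ i, c i = 2 * ∑ i ∈ B, a i := by
      rw [← Finset.sum_sub_distrib]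
      calc ∑ i, (a i - c i) = ∑ i, (if c i < 0 then 2 * a i else 0) :=
            Finset.sum_congr rfl fun i _ => hptwise i
        _ = ∑ i ∈ B, 2 * a i := (Finset.sum_filter _ _).symm
        _ = 2 * ∑ i ∈ B, a i := by rw [Finset.mul_sum]
    rw [← hbsum] at this; linarith
  have hSB : ∑ i ∈ B, a i ≤ (m:ℝ) * a k := by
    have h1 : ∑ i ∈ B, a i ≤ B.card • a k :=
      Finset.sum_le_card_nsmul _ _ _ fun i hi => hkmax i hi
    have h2 : (B.card : ℝ) ≤ m := by
      have := (Finset.card_filter_le Finset.univ (fun i => c i < 0))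
      simp only [Finset.card_univ, Fintype.card_fin] at this
      exact_mod_cast this
    calc ∑ i ∈ B, a i ≤ (B.card : ℝ) * a k := by rw [← nsmul_eq_mul]; exact h1
      _ ≤ (m:ℝ) * a k := mul_le_mul_of_nonneg_right h2 hak.le
  have hTle : T ≤ (2 * (m:ℝ) - 1) * a k := by
    have hTeq : T = (∑ i, a i) - a k := Finset.sum_erase_eq_sub (Finset.mem_univ k)
    rw [hTeq, hsuma]; nlinarith
  have hcka : c k = -a k := by
    have h1 := habs k
    rw [abs_of_neg hck] at h1
    linarith
  -- conclude 1 ≤ (2m-1) R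
  have hfin : 1 ≤ (2 * (m:ℝ) - 1) * R := by
    have h1 : 0 ≤ 2 * c k + ((b j - c k) + T * R) := le_trans hpk hub
    have h2 : T * R ≤ ((2 * (m:ℝ) - 1) * a k) * R := mul_le_mul_of_nonneg_right hTle hR0
    rw [hcka] at h1
    nlinarith
  -- numeric contradiction
  have hL : 0 < Real.log (2 * (m : ℝ) ^ 2 / δ) := by
    apply Real.log_pos
    rw [lt_div_iff₀ hδ0]
    nlinarith
  have hd0 : (0:ℝ) < d := by
    have hpos : 0 < 8 * (m:ℝ) ^ 4 * Real.log (2 * (m : ℝ) ^ 2 / δ) := by positivity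
    linarith
  have hR2 : R ^ 2 = 2 * Real.log (2 * (m : ℝ) ^ 2 / δ) / d := by
    rw [hR, Real.sq_sqrt]
    positivity
  have hq : 4 * (m:ℝ) ^ 4 * R ^ 2 ≤ 1 := by
    rw [hR2]
    have heq : 4 * (m:ℝ) ^ 4 * (2 * Real.log (2 * (m : ℝ) ^ 2 / δ) / d)
        = (8 * (m:ℝ) ^ 4 * Real.log (2 * (m : ℝ) ^ 2 / δ)) / d := by ring
    rw [heq, div_le_one hd0]
    exact hd
  have h2 : 1 ≤ ((2 * (m:ℝ) - 1) * R) ^ 2 := by nlinarith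
  nlinarith [h2, hq, hm1, sq_nonneg R, mul_nonneg (mul_nonneg (sq_nonneg R) (by linarith : (0:ℝ) ≤ (m:ℝ) - 1)) (by linarith : (0:ℝ) ≤ (m:ℝ) + 1), sq_nonneg ((m:ℝ) - 1)]
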